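/- Let L be a line arrangement of k distinct lines in the complex projective plane with k odd, k ≥ 5, t_3(L) ≠ 0 and t_r(L) = 0 for all r > 3. Then the Levi graph G(L) contains an induced cycle of length 2i for every integer i with 3 ≤ i ≤ ⌊(k+9)/4⌋. -/

import Mathlib

open scoped LinearAlgebra.Projectivization
open Projectivization

/-- The complex projective plane. -/
abbrev ProjPoint := ℙ ℂ (Fin 3 → ℂ)

/-- A subset of the projective plane is a (projective) line if it is the zero locus of a
nonzero linear form. -/
def IsProjLine (L : Set ProjPoint) : Prop :=
  ∃ f : (Fin 3 → ℂ) →ₗ[ℂ] ℂ, f ≠ 0 ∧ L = {p | p.submodule ≤ LinearMap.ker f}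

/-- The line in the projective plane with equation `a*x + b*y + c*z = 0`. -/
def projLine (a b c : ℂ) : Set ProjPoint :=
  {p : ProjPoint | ∀ v ∈ p.submodule, a * v 0 + b * v 1 + c * v 2 = 0}

/-- An arrangement of `k` distinct lines in the complex projective plane. -/
structure LineArrangement (k : ℕ) where
  line : Fin k → Set ProjPoint
  isLine : ∀ i, IsProjLine (line i)
  inj : Function.Injective line

namespace LineArrangement

variable {k : ℕ} (A : LineArrangement k)

/-- The multiplicity of a point: the number of lines of the arrangement passing through it. -/
noncomputable def mult (p : ProjPoint) : ℕ :=
  Set.ncard {i : Fin k | p ∈ A.line i}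

/-- The singular points of the arrangement: points lying on at least two of the lines. -/
def sing : Set ProjPoint := {p | 2 ≤ A.mult p}

/-- `A.t r` is the number of points of multiplicity exactly `r`. -/
noncomputable def t (r : ℕ) : ℕ := Set.ncard {p | A.mult p = r}

/-- The Levi graph of a line arrangement: the bipartite graph on `Sing(L) ⊔ L` where a point is
adjacent to a line iff the point lies on the line. -/
def levi : SimpleGraph (↥A.sing ⊕ Fin k) where
  Adj v w :=
    match v, w with
    | Sum.inl p, Sum.inr i => p.1 ∈ A.line i
    | Sum.inr i, Sum.inl p => p.1 ∈ A.line i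
    | _, _ => False
  symm := by
    constructor
    rintro (p | i) (q | j) h <;> simp_all
  loopless := by
    constructor
    rintro (p | i) h <;> simp_all

end LineArrangement

/-- A simple graph has an induced cycle of length `n` if there is an induced subgraph
isomorphic to the cycle graph `C_n`, i.e. a graph embedding of `C_n`. -/
def HasInducedCycle {V : Type*} (G : SimpleGraph V) (n : ℕ) : Prop :=
  Nonempty (SimpleGraph.cycleGraph n ↪g G)


section AuxGeometry

lemma line_exists_W {L : Set ProjPoint} (h : IsProjLine L) :
    ∃ W : Submodule ℂ (Fin 3 → ℂ), Module.finrank ℂ W = 2 ∧ L = {p | p.submodule ≤ W} := by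
  obtain ⟨f, hf, rfl⟩ := h
  refine ⟨LinearMap.ker f, ?_, rfl⟩
  have h3 : Module.finrank ℂ (Fin 3 → ℂ) = 3 := by simp
  have hrn := LinearMap.finrank_range_add_finrank_ker f
  have hle : Module.finrank ℂ (LinearMap.range f) ≤ 1 := by
    simpa using Submodule.finrank_le (LinearMap.range f)
  have hne : LinearMap.range f ≠ ⊥ := by
    rwa [ne_eq, LinearMap.range_eq_bot]
  have hpos : 0 < Module.finrank ℂ (LinearMap.range f) := by
    rcases Nat.eq_zero_or_pos (Module.finrank ℂ (LinearMap.range f)) with h0 | h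
    · exact absurd (Submodule.finrank_eq_zero.mp h0) hne
    · exact h
  omega

lemma exists_common_point {L1 L2 : Set ProjPoint} (h1 : IsProjLine L1) (h2 : IsProjLine L2) :
    ∃ p : ProjPoint, p ∈ L1 ∧ p ∈ L2 := by
  obtain ⟨W1, hW1, rfl⟩ := line_exists_W h1
  obtain ⟨W2, hW2, rfl⟩ := line_exists_W h2
  have h3 : Module.finrank ℂ (Fin 3 → ℂ) = 3 := by simp
  have hsup : Module.finrank ℂ ↥(W1 ⊔ W2) ≤ 3 := by
    simpa [h3] using Submodule.finrank_le (W1 ⊔ W2)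
  have hs := Submodule.finrank_sup_add_finrank_inf_eq W1 W2
  have hpos : 0 < Module.finrank ℂ ↥(W1 ⊓ W2) := by omega
  have hne : W1 ⊓ W2 ≠ ⊥ := by
    intro hb
    rw [hb] at hpos
    simp at hpos
  obtain ⟨v, hv, hv0⟩ := Submodule.exists_mem_ne_zero_of_ne_bot hne
  refine ⟨Projectivization.mk ℂ v hv0, ?_, ?_⟩
  · show Projectivization.submodule _ ≤ _
    rw [Projectivization.submodule_mk, Submodule.span_singleton_le_iff_mem]
    exact (Submodule.mem_inf.mp hv).1
  · show Projectivization.submodule _ ≤ _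
    rw [Projectivization.submodule_mk, Submodule.span_singleton_le_iff_mem]
    exact (Submodule.mem_inf.mp hv).2

lemma eq_line_of_two_points {L1 L2 : Set ProjPoint} (h1 : IsProjLine L1) (h2 : IsProjLine L2)
    {p q : ProjPoint} (hne : p ≠ q) (hp1 : p ∈ L1) (hp2 : p ∈ L2) (hq1 : q ∈ L1) (hq2 : q ∈ L2) :
    L1 = L2 := by
  obtain ⟨W1, hW1, rfl⟩ := line_exists_W h1
  obtain ⟨W2, hW2, rfl⟩ := line_exists_W h2
  have hPQ : p.submodule ≠ q.submodule := fun h => hne (Projectivization.submodule_injective h)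
  have hinf : p.submodule ⊓ q.submodule = ⊥ := by
    by_contra hb
    obtain ⟨v, hv, hv0⟩ := Submodule.exists_mem_ne_zero_of_ne_bot hb
    have e1 : Submodule.span ℂ {v} = p.submodule := by
      apply Submodule.eq_of_le_of_finrank_eq
      · rw [Submodule.span_singleton_le_iff_mem]; exact (Submodule.mem_inf.mp hv).1
      · rw [finrank_span_singleton hv0, Projectivization.finrank_submodule]
    have e2 : Submodule.span ℂ {v} = q.submodule := by
      apply Submodule.eq_of_le_of_finrank_eq
      · rw [Submodule.span_singleton_le_iff_mem]; exact (Submodule.mem_inf.mp hv).2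
      · rw [finrank_span_singleton hv0, Projectivization.finrank_submodule]
    exact hPQ (e1 ▸ e2)
  have hfr : Module.finrank ℂ ↥(p.submodule ⊔ q.submodule) = 2 := by
    have hs := Submodule.finrank_sup_add_finrank_inf_eq p.submodule q.submodule
    rw [hinf] at hs
    simp only [finrank_bot, add_zero] at hs
    rw [hs, Projectivization.finrank_submodule, Projectivization.finrank_submodule]
  have e1 : p.submodule ⊔ q.submodule = W1 := by
    apply Submodule.eq_of_le_of_finrank_eq (sup_le hp1 hq1)
    rw [hfr, hW1]
  have e2 : p.submodule ⊔ q.submodule = W2 := by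
    apply Submodule.eq_of_le_of_finrank_eq (sup_le hp2 hq2)
    rw [hfr, hW2]
  rw [← e1, ← e2]


end AuxGeometry

namespace LineArrangement

variable {k : ℕ} (A : LineArrangement k)

variable {A}

lemma unique_common {i j : Fin k} (hij : i ≠ j) {p q : ProjPoint}
    (hpi : p ∈ A.line i) (hpj : p ∈ A.line j) (hqi : q ∈ A.line i) (hqj : q ∈ A.line j) :
    p = q := by
  by_contra hne
  exact hij (A.inj (eq_line_of_two_points (A.isLine i) (A.isLine j) hne hpi hpj hqi hqj))

variable (A)

noncomputable def pt (i j : Fin k) : ProjPoint :=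
  (exists_common_point (A.isLine i) (A.isLine j)).choose

lemma pt_mem_left (i j : Fin k) : A.pt i j ∈ A.line i :=
  (exists_common_point (A.isLine i) (A.isLine j)).choose_spec.1

lemma pt_mem_right (i j : Fin k) : A.pt i j ∈ A.line j :=
  (exists_common_point (A.isLine i) (A.isLine j)).choose_spec.2

variable {A}

lemma eq_pt {i j : Fin k} (hij : i ≠ j) {p : ProjPoint}
    (hp1 : p ∈ A.line i) (hp2 : p ∈ A.line j) : p = A.pt i j :=
  unique_common hij hp1 hp2 (A.pt_mem_left i j) (A.pt_mem_right i j)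

lemma pt_comm {i j : Fin k} (hij : i ≠ j) : A.pt i j = A.pt j i :=
  eq_pt hij.symm (A.pt_mem_right i j) (A.pt_mem_left i j)

variable (A)

noncomputable def through (q : ProjPoint) : Finset (Fin k) :=
  Set.Finite.toFinset (Set.toFinite {j | q ∈ A.line j})

lemma mem_through {q : ProjPoint} {j : Fin k} : j ∈ A.through q ↔ q ∈ A.line j :=
  Set.Finite.mem_toFinset _

lemma card_through (q : ProjPoint) : (A.through q).card = A.mult q :=
  (Set.ncard_eq_toFinset_card _ _).symm

variable {A}

lemma two_le_mult {q : ProjPoint} {i j : Fin k} (hij : i ≠ j)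
    (hi : q ∈ A.line i) (hj : q ∈ A.line j) : 2 ≤ A.mult q := by
  rw [← A.card_through]
  have hsub : ({i, j} : Finset (Fin k)) ⊆ A.through q := by
    intro x hx
    rcases Finset.mem_insert.mp hx with rfl | hx
    · exact A.mem_through.mpr hi
    · rw [Finset.mem_singleton] at hx; subst hx; exact A.mem_through.mpr hj
  calc 2 = ({i, j} : Finset (Fin k)).card := (Finset.card_pair hij).symm
  _ ≤ _ := Finset.card_le_card hsub

lemma mem_sing {q : ProjPoint} {i j : Fin k} (hij : i ≠ j)
    (hi : q ∈ A.line i) (hj : q ∈ A.line j) : q ∈ A.sing :=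
  two_le_mult hij hi hj

lemma mult_le_three (hr : ∀ r : ℕ, 3 < r → A.t r = 0) (p : ProjPoint) : A.mult p ≤ 3 := by
  by_contra hcon
  push_neg at hcon
  have hfin : {q | A.mult q = A.mult p}.Finite := by
    have hsub : {q | A.mult q = A.mult p} ⊆
        ⋃ ij : Fin k × Fin k, {q | ij.1 ≠ ij.2 ∧ q ∈ A.line ij.1 ∧ q ∈ A.line ij.2} := by
      intro q hq
      have h2 : 1 < (A.through q).card := by
        rw [A.card_through, Set.mem_setOf_eq.mp hq]; omega
      obtain ⟨a, ha, b, hb, hab⟩ := Finset.one_lt_card.mp h2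
      exact Set.mem_iUnion.mpr ⟨(a, b), hab, A.mem_through.mp ha, A.mem_through.mp hb⟩
    refine Set.Finite.subset (Set.finite_iUnion fun ij => ?_) hsub
    refine Set.Subsingleton.finite fun x hx y hy => ?_
    exact unique_common hx.1 hx.2.1 hx.2.2 hy.2.1 hy.2.2
  have hne : A.t (A.mult p) ≠ 0 := by
    have : 0 < A.t (A.mult p) := by
      rw [t]
      exact (Set.ncard_pos hfin).mpr ⟨p, rfl⟩
    omega
  exact hne (hr _ (by omega))

end LineArrangement

namespace LineArrangement

variable {k : ℕ} {A : LineArrangement k}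

/-- Lines through `q` other than `e1, e2`. -/
noncomputable def piece (A : LineArrangement k) (q : ProjPoint) (e1 e2 : Fin k) :
    Finset (Fin k) := A.through q \ {e1, e2}

lemma card_piece_le_one (hm3 : ∀ p, A.mult p ≤ 3) {q : ProjPoint} {e1 e2 : Fin k}
    (h12 : e1 ≠ e2) (h1 : q ∈ A.line e1) (h2 : q ∈ A.line e2) :
    (A.piece q e1 e2).card ≤ 1 := by
  have hsub : ({e1, e2} : Finset (Fin k)) ⊆ A.through q := by
    intro x hx
    rcases Finset.mem_insert.mp hx with rfl | hx
    · exact A.mem_through.mpr h1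
    · rw [Finset.mem_singleton] at hx; subst hx; exact A.mem_through.mpr h2
  rw [piece, Finset.card_sdiff_of_subset hsub, Finset.card_pair h12, A.card_through]
  have := hm3 q
  omega

lemma not_line_of_not_mem_piece {q : ProjPoint} {e1 e2 j : Fin k}
    (hj : j ∉ A.piece q e1 e2) (h1 : j ≠ e1) (h2 : j ≠ e2) : q ∉ A.line j := by
  intro hq
  apply hj
  rw [piece, Finset.mem_sdiff]
  refine ⟨A.mem_through.mpr hq, ?_⟩
  simp only [Finset.mem_insert, Finset.mem_singleton]
  tauto

lemma newpt_off {e1 e j : Fin k} (he : e1 ≠ e) (hj1 : j ≠ e1) (hj2 : j ≠ e)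
    (hp : j ∉ A.piece (A.pt e1 e) e1 e) : A.pt e1 j ∉ A.line e := by
  intro hmem
  have heq : A.pt e1 j = A.pt e1 e := eq_pt he (A.pt_mem_left e1 j) hmem
  exact not_line_of_not_mem_piece hp hj1 hj2 (heq ▸ A.pt_mem_right e1 j)

/-- The lines not passing through `P`. -/
noncomputable def pool (A : LineArrangement k) (P : ProjPoint) : Finset (Fin k) :=
  Finset.univ \ A.through P

lemma mem_pool {P : ProjPoint} {j : Fin k} : j ∈ A.pool P ↔ P ∉ A.line j := by
  rw [pool, Finset.mem_sdiff]
  simp [A.mem_through]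

lemma card_pool_ge (hm3 : ∀ p, A.mult p ≤ 3) (P : ProjPoint) :
    k - 3 ≤ (A.pool P).card := by
  rw [pool, Finset.card_sdiff_of_subset (Finset.subset_univ _), Finset.card_univ, Fintype.card_fin]
  have h1 : (A.through P).card ≤ 3 := by rw [A.card_through]; exact hm3 P
  omega

/-- A partial induced path for the greedy construction: lines `f 0 = a, f 1, ..., f t`,
with `f 1, ..., f t` not through `P`, and points `x s ∈ f s ∩ f (s+1)` for `s < t`,
each lying only on its two adjacent lines (among chosen ones and `ib`). -/
structure GPath (A : LineArrangement k) (P : ProjPoint) (ia ib : Fin k) (t : ℕ) where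
  f : ℕ → Fin k
  x : ℕ → ProjPoint
  h0 : f 0 = ia
  hpool : ∀ s, 1 ≤ s → s ≤ t → P ∉ A.line (f s)
  hinj : ∀ s u, s ≤ t → u ≤ t → f s = f u → s = u
  hxl : ∀ s, s < t → x s ∈ A.line (f s)
  hxr : ∀ s, s < t → x s ∈ A.line (f (s + 1))
  hoff : ∀ s u, s < t → u ≤ t → u ≠ s → u ≠ s + 1 → x s ∉ A.line (f u)
  hoffb : ∀ s, s < t → x s ∉ A.line ib

section Greedy

variable {P : ProjPoint} {ia ib ic : Fin k}

lemma GPath.f_ne_ib (hab : ia ≠ ib) (hPb : P ∈ A.line ib) {t : ℕ}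
    (pa : GPath A P ia ib t) {s : ℕ} (hs : s ≤ t) : pa.f s ≠ ib := by
  rcases Nat.eq_zero_or_pos s with rfl | h1
  · rw [pa.h0]; exact hab
  · intro h
    exact pa.hpool s h1 hs (by rw [h]; exact hPb)

lemma GPath.extend (hm3 : ∀ p, A.mult p ≤ 3) (hab : ia ≠ ib) (hPb : P ∈ A.line ib)
    {t : ℕ} (pa : GPath A P ia ib t) (hk : 3 * t + 6 ≤ k) :
    Nonempty (GPath A P ia ib (t + 1)) := by
  classical
  set Bad : Finset (Fin k) :=
    ((Finset.range (t + 1)).image pa.f) ∪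
    ((Finset.range t).biUnion fun s => A.piece (pa.x s) (pa.f s) (pa.f (s + 1))) ∪
    ((Finset.range t).biUnion fun u => A.piece (A.pt (pa.f t) (pa.f u)) (pa.f t) (pa.f u)) ∪
    A.piece (A.pt (pa.f t) ib) (pa.f t) ib with hBadDef
  have hb1 : ((Finset.range (t + 1)).image pa.f).card ≤ t + 1 :=
    le_trans Finset.card_image_le (by rw [Finset.card_range])
  have hb2 : ((Finset.range t).biUnion fun s =>
      A.piece (pa.x s) (pa.f s) (pa.f (s + 1))).card ≤ t := by
    refine le_trans (Finset.card_biUnion_le) ?_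
    calc ∑ s ∈ Finset.range t, (A.piece (pa.x s) (pa.f s) (pa.f (s + 1))).card
        ≤ ∑ s ∈ Finset.range t, 1 := by
          refine Finset.sum_le_sum fun s hs => ?_
          rw [Finset.mem_range] at hs
          refine card_piece_le_one hm3 ?_ (pa.hxl s hs) (pa.hxr s hs)
          intro h
          have := pa.hinj s (s + 1) (by omega) (by omega) h
          omega
      _ = t := by simp
  have hb3 : ((Finset.range t).biUnion fun u =>
      A.piece (A.pt (pa.f t) (pa.f u)) (pa.f t) (pa.f u)).card ≤ t := by
    refine le_trans (Finset.card_biUnion_le) ?_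
    calc ∑ u ∈ Finset.range t, (A.piece (A.pt (pa.f t) (pa.f u)) (pa.f t) (pa.f u)).card
        ≤ ∑ u ∈ Finset.range t, 1 := by
          refine Finset.sum_le_sum fun u hu => ?_
          rw [Finset.mem_range] at hu
          have hne : pa.f t ≠ pa.f u := by
            intro h
            have := pa.hinj t u (le_refl t) (by omega) h
            omega
          exact card_piece_le_one hm3 hne (A.pt_mem_left _ _) (A.pt_mem_right _ _)
      _ = t := by simp
  have hb4 : (A.piece (A.pt (pa.f t) ib) (pa.f t) ib).card ≤ 1 :=
    card_piece_le_one hm3 (pa.f_ne_ib hab hPb (le_refl t))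
      (A.pt_mem_left _ _) (A.pt_mem_right _ _)
  have hBadCard : Bad.card ≤ 3 * t + 2 := by
    rw [hBadDef]
    refine le_trans (Finset.card_union_le _ _) ?_
    refine le_trans (Nat.add_le_add_right (Finset.card_union_le _ _) _) ?_
    refine le_trans (Nat.add_le_add_right (Nat.add_le_add_right (Finset.card_union_le _ _) _) _) ?_
    omega
  have hcard : Bad.card < (A.pool P).card := by
    have := card_pool_ge hm3 (A := A) P
    omega
  obtain ⟨j, hj⟩ := Finset.card_pos.mp (by
    have := Finset.le_card_sdiff Bad (A.pool P)
    omega : 0 < ((A.pool P) \ Bad).card)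
  rw [Finset.mem_sdiff] at hj
  obtain ⟨hjpool, hjBad⟩ := hj
  have hjP : P ∉ A.line j := mem_pool.mp hjpool
  have hjBad1 : j ∉ (Finset.range (t + 1)).image pa.f := fun h => hjBad (by
    rw [hBadDef]; exact Finset.mem_union_left _ (Finset.mem_union_left _ (Finset.mem_union_left _ h)))
  have hjBad2 : ∀ s, s < t → j ∉ A.piece (pa.x s) (pa.f s) (pa.f (s + 1)) := fun s hs h => hjBad (by
    rw [hBadDef]
    exact Finset.mem_union_left _ (Finset.mem_union_left _ (Finset.mem_union_right _
      (Finset.mem_biUnion.mpr ⟨s, Finset.mem_range.mpr hs, h⟩))))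
  have hjBad3 : ∀ u, u < t → j ∉ A.piece (A.pt (pa.f t) (pa.f u)) (pa.f t) (pa.f u) := fun u hu h => hjBad (by
    rw [hBadDef]
    exact Finset.mem_union_left _ (Finset.mem_union_right _
      (Finset.mem_biUnion.mpr ⟨u, Finset.mem_range.mpr hu, h⟩)))
  have hjBad4 : j ∉ A.piece (A.pt (pa.f t) ib) (pa.f t) ib := fun h => hjBad (by
    rw [hBadDef]; exact Finset.mem_union_right _ h)
  have hjf : ∀ u, u ≤ t → j ≠ pa.f u := by
    intro u hu h
    exact hjBad1 (Finset.mem_image.mpr ⟨u, Finset.mem_range.mpr (by omega), h.symm⟩)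
  have hjib : j ≠ ib := fun h => hjP (h ▸ hPb)
  have hjold : ∀ s, s < t → pa.x s ∉ A.line j := by
    intro s hs
    exact not_line_of_not_mem_piece (hjBad2 s hs) (hjf s (by omega)) (hjf (s + 1) (by omega))
  have hjnewmid : ∀ u, u < t → A.pt (pa.f t) j ∉ A.line (pa.f u) := by
    intro u hu
    have hne : pa.f t ≠ pa.f u := by
      intro h
      have := pa.hinj t u (le_refl t) (by omega) h
      omega
    exact newpt_off hne (hjf t (le_refl t)) (hjf u (by omega)) (hjBad3 u hu)
  have hjnewb : A.pt (pa.f t) j ∉ A.line ib :=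
    newpt_off (pa.f_ne_ib hab hPb (le_refl t)) (hjf t (le_refl t)) hjib hjBad4
  set f' : ℕ → Fin k := Function.update pa.f (t + 1) j with hf'def
  set x' : ℕ → ProjPoint := Function.update pa.x t (A.pt (pa.f t) j) with hx'def
  have hf1 : ∀ u, u ≤ t → f' u = pa.f u := by
    intro u hu
    rw [hf'def, Function.update_of_ne (by omega)]
  have hf2 : f' (t + 1) = j := by rw [hf'def, Function.update_self]
  have hx1 : ∀ s, s < t → x' s = pa.x s := by
    intro s hs
    rw [hx'def, Function.update_of_ne (by omega)]
  have hx2 : x' t = A.pt (pa.f t) j := by rw [hx'def, Function.update_self]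
  refine ⟨⟨f', x', ?_, ?_, ?_, ?_, ?_, ?_, ?_⟩⟩
  · rw [hf1 0 (by omega)]; exact pa.h0
  · intro s h1 h2
    rcases Nat.lt_or_ge s (t + 1) with h | h
    · rw [hf1 s (by omega)]; exact pa.hpool s h1 (by omega)
    · have hst : s = t + 1 := by omega
      rw [hst, hf2]
      exact hjP
  · intro s u hs hu h
    rcases Nat.lt_or_ge s (t + 1) with h1 | h1 <;> rcases Nat.lt_or_ge u (t + 1) with h2 | h2
    · rw [hf1 s (by omega), hf1 u (by omega)] at h
      exact pa.hinj s u (by omega) (by omega) h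
    · have hu' : u = t + 1 := by omega
      rw [hf1 s (by omega), hu', hf2] at h
      exact absurd h.symm (hjf s (by omega))
    · have hs' : s = t + 1 := by omega
      rw [hf1 u (by omega), hs', hf2] at h
      exact absurd h (hjf u (by omega))
    · omega
  · intro s hs
    rcases Nat.lt_or_ge s t with h | h
    · rw [hx1 s h, hf1 s (by omega)]
      exact pa.hxl s h
    · have hst : s = t := by omega
      rw [hst, hx2, hf1 t (by omega)]
      exact A.pt_mem_left _ _
  · intro s hs
    rcases Nat.lt_or_ge s t with h | h
    · rw [hx1 s h, hf1 (s + 1) (by omega)]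
      exact pa.hxr s h
    · have hst : s = t := by omega
      rw [hst, hx2, hf2]
      exact A.pt_mem_right _ _
  · intro s u hs hu h1 h2
    rcases Nat.lt_or_ge s t with h | h
    · rw [hx1 s h]
      rcases Nat.lt_or_ge u (t + 1) with h3 | h3
      · rw [hf1 u (by omega)]
        exact pa.hoff s u h (by omega) h1 h2
      · have hu' : u = t + 1 := by omega
        rw [hu', hf2]
        exact hjold s h
    · have hst : s = t := by omega
      subst hst
      rw [hx2]
      have h3 : u < s := by omega
      rw [hf1 u (by omega)]
      exact hjnewmid u h3
  · intro s hs
    rcases Nat.lt_or_ge s t with h | h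
    · rw [hx1 s h]
      exact pa.hoffb s h
    · have hst : s = t := by omega
      rw [hst, hx2]
      exact hjnewb

lemma exists_gpath (hm3 : ∀ p, A.mult p ≤ 3) (hab : ia ≠ ib) (hPb : P ∈ A.line ib) :
    ∀ t : ℕ, 3 * t + 3 ≤ k → Nonempty (GPath A P ia ib t) := by
  intro t
  induction t with
  | zero =>
    intro _
    exact ⟨⟨fun _ => ia, fun _ => P, rfl, by omega, fun s u hs hu _ => by omega,
      by omega, by omega, by omega, by omega⟩⟩
  | succ t ih =>
    intro h
    obtain ⟨pa⟩ := ih (by omega)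
    exact pa.extend hm3 hab hPb (by omega)

end Greedy

end LineArrangement

namespace LineArrangement

section Final

variable {k : ℕ} {A : LineArrangement k} {P : ProjPoint} {ia ib : Fin k}

lemma exists_cycle_data (hm3 : ∀ p, A.mult p ≤ 3) (hab : ia ≠ ib)
    (hPa : P ∈ A.line ia) (hPb : P ∈ A.line ib)
    {t : ℕ} (pa : GPath A P ia ib t) (hk5 : 5 ≤ k) (hk : 4 * t + 3 ≤ k) :
    ∃ (g : ℕ → Fin k) (w : ℕ → ProjPoint),
      (∀ s u, s ≤ t + 2 → u ≤ t + 2 → g s = g u → s = u) ∧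
      (∀ s, s ≤ t + 2 → w s ∈ A.sing) ∧
      (∀ s u, s ≤ t + 2 → u ≤ t + 2 →
        (w s ∈ A.line (g u) ↔ (u = s ∨ u = (s + 1) % (t + 3)))) := by
  classical
  set B1 : Finset (Fin k) := (Finset.Icc 1 t).image pa.f with hB1
  set B2 : Finset (Fin k) :=
    (Finset.range t).biUnion fun s => A.piece (pa.x s) (pa.f s) (pa.f (s + 1)) with hB2
  set B3 : Finset (Fin k) :=
    (Finset.range (t - 1)).biUnion fun u => A.piece (A.pt (pa.f t) (pa.f u)) (pa.f t) (pa.f u)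
    with hB3
  set B4 : Finset (Fin k) := A.piece (A.pt (pa.f t) ib) (pa.f t) ib with hB4
  set B5 : Finset (Fin k) :=
    (Finset.Icc 1 (t - 1)).biUnion fun u => A.piece (A.pt ib (pa.f u)) ib (pa.f u) with hB5
  have hfne : ∀ u, u ≤ t → u ≠ t → pa.f t ≠ pa.f u := by
    intro u hu hut h
    exact hut (pa.hinj t u le_rfl hu h).symm
  have hftib : pa.f t ≠ ib := pa.f_ne_ib hab hPb le_rfl
  have hibf : ∀ u, 1 ≤ u → u ≤ t → ib ≠ pa.f u := by
    intro u h1 h2 h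
    exact pa.hpool u h1 h2 (by rw [← h]; exact hPb)
  have hc1 : B1.card ≤ t := le_trans Finset.card_image_le (by simp)
  have hc2 : B2.card ≤ t := by
    rw [hB2]
    refine le_trans Finset.card_biUnion_le (le_trans (Finset.sum_le_sum
      (fun s hs => ?_)) (by simp : (∑ _s ∈ Finset.range t, 1) ≤ t))
    rw [Finset.mem_range] at hs
    refine card_piece_le_one hm3 ?_ (pa.hxl s hs) (pa.hxr s hs)
    intro h
    have := pa.hinj s (s + 1) (by omega) (by omega) h
    omega
  have hc3 : B3.card ≤ t - 1 := by
    rw [hB3]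
    refine le_trans Finset.card_biUnion_le (le_trans (Finset.sum_le_sum
      (fun u hu => ?_)) (by simp : (∑ _s ∈ Finset.range (t - 1), 1) ≤ t - 1))
    rw [Finset.mem_range] at hu
    exact card_piece_le_one hm3 (hfne u (by omega) (by omega))
      (A.pt_mem_left _ _) (A.pt_mem_right _ _)
  have hc4 : B4.card ≤ 1 :=
    card_piece_le_one hm3 hftib (A.pt_mem_left _ _) (A.pt_mem_right _ _)
  have hc5 : B5.card ≤ t - 1 := by
    rw [hB5]
    refine le_trans Finset.card_biUnion_le (le_trans (Finset.sum_le_sum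
      (fun u hu => ?_)) (by simp : (∑ _s ∈ Finset.Icc 1 (t - 1), 1) ≤ t - 1))
    rw [Finset.mem_Icc] at hu
    exact card_piece_le_one hm3 (hibf u hu.1 (by omega))
      (A.pt_mem_left _ _) (A.pt_mem_right _ _)
  set Bad : Finset (Fin k) := B1 ∪ B2 ∪ B3 ∪ B4 ∪ B5 with hBad
  have hBadCard : Bad.card < (A.pool P).card := by
    have h1 : Bad.card ≤ B1.card + B2.card + B3.card + B4.card + B5.card := by
      rw [hBad]
      refine le_trans (Finset.card_union_le _ _) ?_
      refine le_trans (Nat.add_le_add_right (Finset.card_union_le _ _) _) ?_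
      refine le_trans (Nat.add_le_add_right (Nat.add_le_add_right (Finset.card_union_le _ _) _) _) ?_
      exact le_trans (Nat.add_le_add_right (Nat.add_le_add_right
        (Nat.add_le_add_right (Finset.card_union_le _ _) _) _) _) le_rfl
    have h2 := card_pool_ge (A := A) hm3 P
    omega
  obtain ⟨j, hj⟩ := Finset.card_pos.mp (by
    have := Finset.le_card_sdiff Bad (A.pool P)
    omega : 0 < ((A.pool P) \ Bad).card)
  rw [Finset.mem_sdiff] at hj
  obtain ⟨hjpool, hjBad⟩ := hj
  have hjP : P ∉ A.line j := mem_pool.mp hjpool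
  have hjn1 : j ∉ B1 := fun h => hjBad (by
    rw [hBad]
    exact Finset.mem_union_left _ (Finset.mem_union_left _ (Finset.mem_union_left _
      (Finset.mem_union_left _ h))))
  have hjn2 : j ∉ B2 := fun h => hjBad (by
    rw [hBad]
    exact Finset.mem_union_left _ (Finset.mem_union_left _ (Finset.mem_union_left _
      (Finset.mem_union_right _ h))))
  have hjn3 : j ∉ B3 := fun h => hjBad (by
    rw [hBad]
    exact Finset.mem_union_left _ (Finset.mem_union_left _ (Finset.mem_union_right _ h)))
  have hjn4 : j ∉ B4 := fun h => hjBad (by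
    rw [hBad]
    exact Finset.mem_union_left _ (Finset.mem_union_right _ h))
  have hjn5 : j ∉ B5 := fun h => hjBad (by
    rw [hBad]
    exact Finset.mem_union_right _ h)
  have hjib : j ≠ ib := fun h => hjP (by rw [h]; exact hPb)
  have hjf : ∀ u, u ≤ t → j ≠ pa.f u := by
    intro u hu h
    rcases Nat.eq_zero_or_pos u with rfl | h1
    · rw [pa.h0] at h
      exact hjP (by rw [h]; exact hPa)
    · exact hjn1 (by rw [hB1]; exact Finset.mem_image.mpr ⟨u, Finset.mem_Icc.mpr ⟨h1, hu⟩, h.symm⟩)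
  have c2 : ∀ s, s < t → pa.x s ∉ A.line j := by
    intro s hs
    refine not_line_of_not_mem_piece (fun h => hjn2 ?_) (hjf s (by omega)) (hjf (s + 1) (by omega))
    rw [hB2]
    exact Finset.mem_biUnion.mpr ⟨s, Finset.mem_range.mpr hs, h⟩
  set y1 : ProjPoint := A.pt (pa.f t) j with hy1
  set y2 : ProjPoint := A.pt ib j with hy2
  have c3 : ∀ u, u < t → y1 ∉ A.line (pa.f u) := by
    intro u hu
    rcases Nat.lt_or_ge u (t - 1) with h | h
    · refine newpt_off (hfne u (by omega) (by omega)) (hjf t le_rfl) (hjf u (by omega))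
        (fun hmem => hjn3 ?_)
      rw [hB3]
      exact Finset.mem_biUnion.mpr ⟨u, Finset.mem_range.mpr h, hmem⟩
    · -- u = t - 1, and t ≥ 1
      have hu' : u = t - 1 := by omega
      have ht1 : 1 ≤ t := by omega
      intro hmem
      have hx : pa.x u ∈ A.line (pa.f u) := pa.hxl u hu
      have hx2 : pa.x u ∈ A.line (pa.f t) := by
        have := pa.hxr u hu
        have : pa.x u ∈ A.line (pa.f (u + 1)) := this
        have huu : u + 1 = t := by omega
        rwa [huu] at this
      have hy1t : y1 ∈ A.line (pa.f t) := A.pt_mem_left _ _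
      have heq : y1 = pa.x u := unique_common (hfne u (by omega) (by omega)) hy1t hmem hx2 hx
      exact c2 u hu (by rw [← heq]; exact A.pt_mem_right _ _)
  have c3b : y1 ∉ A.line ib :=
    newpt_off hftib (hjf t le_rfl) hjib (fun h => hjn4 (by rw [hB4]; exact h))
  have c4 : ∀ u, u ≤ t → y2 ∉ A.line (pa.f u) := by
    intro u hu
    rcases Nat.eq_zero_or_pos u with rfl | h1
    · rw [pa.h0]
      intro hmem
      have : y2 = P := unique_common hab.symm (A.pt_mem_left ib j) hmem hPb hPa
      exact hjP (by rw [← this]; exact A.pt_mem_right _ _)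
    · rcases Nat.lt_or_ge u t with h2 | h2
      · refine newpt_off (hibf u h1 (by omega)) hjib (hjf u (by omega)) (fun hmem => hjn5 ?_)
        rw [hB5]
        exact Finset.mem_biUnion.mpr ⟨u, Finset.mem_Icc.mpr ⟨h1, by omega⟩, hmem⟩
      · have hu' : u = t := by omega
        subst hu'
        intro hmem
        have heq : y2 = A.pt (pa.f u) ib := eq_pt hftib hmem (A.pt_mem_left ib j)
        refine not_line_of_not_mem_piece (fun h => hjn4 (by rw [hB4]; exact h))
          (hjf u le_rfl) hjib ?_
        rw [← heq]
        exact A.pt_mem_right _ _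
  -- assemble
  set g : ℕ → Fin k := fun u => if u ≤ t then pa.f u else if u = t + 1 then j else ib with hg
  set w : ℕ → ProjPoint :=
    fun s => if s < t then pa.x s else if s = t then y1 else if s = t + 1 then y2 else P with hw
  have hg1 : ∀ u, u ≤ t → g u = pa.f u := by intro u hu; simp [hg, hu]
  have hg2 : g (t + 1) = j := by simp [hg]
  have hg3 : g (t + 2) = ib := by
    rw [hg]
    simp only []
    rw [if_neg (by omega), if_neg (by omega)]
  have hw1 : ∀ s, s < t → w s = pa.x s := by intro s hs; simp [hw, hs]
  have hw2 : w t = y1 := by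
    rw [hw]
    simp only []
    rw [if_neg (by omega)]
    simp
  have hw3 : w (t + 1) = y2 := by
    rw [hw]
    simp only []
    rw [if_neg (by omega), if_neg (by omega)]
    simp
  have hw4 : w (t + 2) = P := by
    rw [hw]
    simp only []
    rw [if_neg (by omega), if_neg (by omega), if_neg (by omega)]
  have hmod1 : ∀ s, s ≤ t + 1 → (s + 1) % (t + 3) = s + 1 :=
    fun s hs => Nat.mod_eq_of_lt (by omega)
  have hmod2 : (t + 2 + 1) % (t + 3) = 0 := by
    simp [Nat.mod_self]
  refine ⟨g, w, ?_, ?_, ?_⟩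
  · -- line injectivity
    intro s u hs hu h
    rcases Nat.lt_or_ge s (t + 1) with h1 | h1 <;> rcases Nat.lt_or_ge u (t + 1) with h2 | h2
    · rw [hg1 s (by omega), hg1 u (by omega)] at h
      exact pa.hinj s u (by omega) (by omega) h
    · rw [hg1 s (by omega)] at h
      rcases (by omega : u = t + 1 ∨ u = t + 2) with rfl | rfl
      · rw [hg2] at h
        exact absurd h.symm (hjf s (by omega))
      · rw [hg3] at h
        exact absurd h (pa.f_ne_ib hab hPb (show s ≤ t by omega))
    · rw [hg1 u (by omega)] at h
      rcases (by omega : s = t + 1 ∨ s = t + 2) with rfl | rfl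
      · rw [hg2] at h
        exact absurd h (hjf u (by omega))
      · rw [hg3] at h
        exact absurd h.symm (pa.f_ne_ib hab hPb (show u ≤ t by omega))
    · rcases (by omega : s = t + 1 ∨ s = t + 2) with rfl | rfl <;>
        rcases (by omega : u = t + 1 ∨ u = t + 2) with rfl | rfl
      · rfl
      · rw [hg2, hg3] at h
        exact absurd h hjib
      · rw [hg2, hg3] at h
        exact absurd h.symm hjib
      · rfl
  · -- sing
    intro s hs
    rcases Nat.lt_or_ge s t with h1 | h1
    · rw [hw1 s h1]
      refine mem_sing (i := pa.f s) (j := pa.f (s + 1)) ?_ (pa.hxl s h1) (pa.hxr s h1)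
      intro h
      have := pa.hinj s (s + 1) (by omega) (by omega) h
      omega
    · rcases (by omega : s = t ∨ s = t + 1 ∨ s = t + 2) with h | h | h
      · rw [h, hw2]
        exact mem_sing (i := pa.f t) (j := j) (fun hh => hjf t le_rfl hh.symm)
          (A.pt_mem_left _ _) (A.pt_mem_right _ _)
      · rw [h, hw3]
        exact mem_sing (i := ib) (j := j) (fun hh => hjib hh.symm)
          (A.pt_mem_left _ _) (A.pt_mem_right _ _)
      · rw [h, hw4]
        exact mem_sing hab hPa hPb
  · -- incidence
    intro s u hs hu
    rcases Nat.lt_or_ge s t with h1 | h1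
    · -- s < t : w s = x s
      rw [hw1 s h1, hmod1 s (by omega)]
      constructor
      · intro hmem
        by_contra hcon
        push_neg at hcon
        obtain ⟨hus, hus1⟩ := hcon
        rcases Nat.lt_or_ge u (t + 1) with h2 | h2
        · rw [hg1 u (by omega)] at hmem
          exact pa.hoff s u h1 (by omega) hus hus1 hmem
        · rcases (by omega : u = t + 1 ∨ u = t + 2) with rfl | rfl
          · rw [hg2] at hmem
            exact c2 s h1 hmem
          · rw [hg3] at hmem
            exact pa.hoffb s h1 hmem
      · intro hd
        rcases hd with h4 | h4
        · rw [h4, hg1 s (by omega)]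
          exact pa.hxl s h1
        · rw [h4, hg1 (s + 1) (by omega)]
          exact pa.hxr s h1
    · rcases (by omega : s = t ∨ s = t + 1 ∨ s = t + 2) with h | h | h
      · -- s = t : w s = y1
        rw [h, hw2, hmod1 t (by omega)]
        constructor
        · intro hmem
          by_contra hcon
          push_neg at hcon
          obtain ⟨hus, hus1⟩ := hcon
          rcases Nat.lt_or_ge u (t + 1) with h2 | h2
          · have h3 : u < t := by omega
            rw [hg1 u (by omega)] at hmem
            exact c3 u h3 hmem
          · rcases (by omega : u = t + 1 ∨ u = t + 2) with h4 | h4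
            · exact hus1 h4
            · rw [h4, hg3] at hmem
              exact c3b hmem
        · intro hd
          rcases hd with h4 | h4
          · rw [h4, hg1 t le_rfl]
            exact A.pt_mem_left _ _
          · rw [h4, hg2]
            exact A.pt_mem_right _ _
      · -- s = t + 1 : w s = y2
        rw [h, hw3, hmod1 (t + 1) (by omega)]
        constructor
        · intro hmem
          by_contra hcon
          push_neg at hcon
          obtain ⟨hus, hus1⟩ := hcon
          rcases Nat.lt_or_ge u (t + 1) with h2 | h2
          · rw [hg1 u (by omega)] at hmem
            exact c4 u (by omega) hmem
          · rcases (by omega : u = t + 1 ∨ u = t + 2) with h4 | h4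
            · exact hus h4
            · exact hus1 h4
        · intro hd
          rcases hd with h4 | h4
          · rw [h4, hg2]
            exact A.pt_mem_right _ _
          · rw [h4, hg3]
            exact A.pt_mem_left _ _
      · -- s = t + 2 : w s = P
        rw [h, hw4, hmod2]
        constructor
        · intro hmem
          by_contra hcon
          push_neg at hcon
          obtain ⟨hus, hus1⟩ := hcon
          rcases Nat.lt_or_ge u (t + 1) with h2 | h2
          · rcases Nat.eq_zero_or_pos u with h3 | h3
            · exact hus1 h3
            · rw [hg1 u (by omega)] at hmem
              exact pa.hpool u h3 (by omega) hmem
          · rcases (by omega : u = t + 1 ∨ u = t + 2) with h4 | h4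
            · rw [h4, hg2] at hmem
              exact hjP hmem
            · exact hus h4
        · intro hd
          rcases hd with h4 | h4
          · rw [h4, hg3]
            exact hPb
          · rw [h4, hg1 0 (by omega), pa.h0]
            exact hPa

end Final

end LineArrangement


lemma nat_mod_char {x n : ℕ} (hn : 0 < n) (h : x < 2 * n) :
    x % n = if x < n then x else x - n := by
  split_ifs with h1
  · exact Nat.mod_eq_of_lt h1
  · push_neg at h1
    rw [Nat.mod_eq_sub_mod h1, Nat.mod_eq_of_lt (by omega)]

namespace LineArrangement

section Embed

variable {k : ℕ} {A : LineArrangement k}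

lemma levi_adj_inr_inl {i : Fin k} {p : ↥A.sing} :
    A.levi.Adj (Sum.inr i) (Sum.inl p) ↔ p.1 ∈ A.line i := Iff.rfl

lemma levi_adj_inl_inr {i : Fin k} {p : ↥A.sing} :
    A.levi.Adj (Sum.inl p) (Sum.inr i) ↔ p.1 ∈ A.line i := Iff.rfl

lemma levi_not_adj_inr_inr {i i' : Fin k} : ¬ A.levi.Adj (Sum.inr i) (Sum.inr i') := fun h => h

lemma levi_not_adj_inl_inl {p q : ↥A.sing} : ¬ A.levi.Adj (Sum.inl p) (Sum.inl q) := fun h => h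

lemma hasInducedCycle_of_data (t : ℕ) (g : ℕ → Fin k) (w : ℕ → ProjPoint)
    (hginj : ∀ s u, s ≤ t + 2 → u ≤ t + 2 → g s = g u → s = u)
    (hsing : ∀ s, s ≤ t + 2 → w s ∈ A.sing)
    (hinc : ∀ s u, s ≤ t + 2 → u ≤ t + 2 →
      (w s ∈ A.line (g u) ↔ (u = s ∨ u = (s + 1) % (t + 3)))) :
    HasInducedCycle A.levi (2 * (t + 3)) := by
  classical
  have hmodm : ∀ s, s ≤ t + 2 → (s + 1) % (t + 3) = if s + 1 < t + 3 then s + 1 else s + 1 - (t + 3) :=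
    fun s hs => nat_mod_char (by omega) (by omega)
  have hwinj : ∀ s u, s ≤ t + 2 → u ≤ t + 2 → w s = w u → s = u := by
    intro s u hs hu h
    by_contra hne
    have h1 : w u ∈ A.line (g u) := (hinc u u hu hu).mpr (Or.inl rfl)
    have h2 : w s ∈ A.line (g u) := by rw [h]; exact h1
    have h3 := (hinc s u hs hu).mp h2
    have h4 : w u ∈ A.line (g s) := by
      rw [← h]; exact (hinc s s hs hs).mpr (Or.inl rfl)
    have h5 := (hinc u s hu hs).mp h4
    rw [hmodm s hs] at h3
    rw [hmodm u hu] at h5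
    rcases h3 with h3 | h3
    · exact hne h3.symm
    rcases h5 with h5 | h5
    · exact hne h5
    split_ifs at h3 h5 <;> omega
  have hs2 : ∀ v : Fin (2 * (t + 3)), w (v.val / 2) ∈ A.sing := fun v => hsing _ (by
    have := v.isLt
    omega)
  set φ : Fin (2 * (t + 3)) → (↥A.sing ⊕ Fin k) := fun v =>
    if v.val % 2 = 0 then Sum.inr (g (v.val / 2)) else Sum.inl ⟨w (v.val / 2), hs2 v⟩ with hφ
  have hφ_even : ∀ v : Fin (2 * (t + 3)), v.val % 2 = 0 → φ v = Sum.inr (g (v.val / 2)) := by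
    intro v hv
    rw [hφ]
    simp only [if_pos hv]
  have hφ_odd : ∀ v : Fin (2 * (t + 3)), v.val % 2 ≠ 0 → φ v = Sum.inl ⟨w (v.val / 2), hs2 v⟩ := by
    intro v hv
    rw [hφ]
    simp only [if_neg hv]
  -- adjacency characterization of the cycle graph
  have key : ∀ a b : Fin (2 * (t + 3)), (SimpleGraph.cycleGraph (2 * (t + 3))).Adj a b ↔
      (a.val = (b.val + 1) % (2 * (t + 3)) ∨ b.val = (a.val + 1) % (2 * (t + 3))) := by
    intro a b
    rw [SimpleGraph.cycleGraph_adj']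
    have ha := a.isLt
    have hb := b.isLt
    have hsub : ∀ x y : Fin (2 * (t + 3)),
        (x - y).val = (2 * (t + 3) - y.val + x.val) % (2 * (t + 3)) := by
      intro x y
      rw [Fin.sub_def]
    rw [hsub a b, hsub b a,
      nat_mod_char (x := 2 * (t + 3) - b.val + a.val) (by omega) (by omega),
      nat_mod_char (x := 2 * (t + 3) - a.val + b.val) (by omega) (by omega),
      nat_mod_char (x := b.val + 1) (by omega) (by omega),
      nat_mod_char (x := a.val + 1) (by omega) (by omega)]
    split_ifs <;> omega
  have hbound : ∀ v : Fin (2 * (t + 3)), v.val / 2 ≤ t + 2 := fun v => by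
    have := v.isLt
    omega
  refine ⟨⟨⟨φ, ?_⟩, ?_⟩⟩
  · -- injectivity
    intro a b hab
    have ha := a.isLt
    have hb := b.isLt
    by_cases pa : a.val % 2 = 0 <;> by_cases pb : b.val % 2 = 0
    · rw [hφ_even a pa, hφ_even b pb] at hab
      have := hginj _ _ (hbound a) (hbound b) (Sum.inr.inj hab)
      apply Fin.ext
      omega
    · rw [hφ_even a pa, hφ_odd b pb] at hab
      exact absurd hab (by simp)
    · rw [hφ_odd a pa, hφ_even b pb] at hab
      exact absurd hab (by simp)
    · rw [hφ_odd a pa, hφ_odd b pb] at hab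
      have h1 : w (a.val / 2) = w (b.val / 2) := congrArg Subtype.val (Sum.inl.inj hab)
      have := hwinj _ _ (hbound a) (hbound b) h1
      apply Fin.ext
      omega
  · -- map_rel_iff
    intro a b
    show A.levi.Adj (φ a) (φ b) ↔ _
    have ha := a.isLt
    have hb := b.isLt
    rw [key a b, nat_mod_char (x := b.val + 1) (by omega) (by omega),
      nat_mod_char (x := a.val + 1) (by omega) (by omega)]
    by_cases pa : a.val % 2 = 0 <;> by_cases pb : b.val % 2 = 0
    · rw [hφ_even a pa, hφ_even b pb]
      refine iff_of_false (fun h => levi_not_adj_inr_inr h) ?_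
      intro h
      rcases h with h | h <;> split_ifs at h <;> omega
    · rw [hφ_even a pa, hφ_odd b pb]
      rw [show A.levi.Adj (Sum.inr (g (a.val / 2))) (Sum.inl ⟨w (b.val / 2), hs2 b⟩) ↔
        w (b.val / 2) ∈ A.line (g (a.val / 2)) from Iff.rfl]
      rw [hinc _ _ (hbound b) (hbound a), hmodm _ (hbound b)]
      split_ifs <;> omega
    · rw [hφ_odd a pa, hφ_even b pb]
      rw [show A.levi.Adj (Sum.inl ⟨w (a.val / 2), hs2 a⟩) (Sum.inr (g (b.val / 2))) ↔
        w (a.val / 2) ∈ A.line (g (b.val / 2)) from Iff.rfl]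
      rw [hinc _ _ (hbound a) (hbound b), hmodm _ (hbound a)]
      split_ifs <;> omega
    · rw [hφ_odd a pa, hφ_odd b pb]
      refine iff_of_false (fun h => levi_not_adj_inl_inl h) ?_
      intro h
      rcases h with h | h <;> split_ifs at h <;> omega

end Embed

end LineArrangement

/-- `k` odd, `k ≥ 5`, `t_3 ≠ 0` and `t_r = 0` for `r > 3`: the Levi graph has an
induced cycle of length `2i` for every `3 ≤ i ≤ ⌊(k+9)/4⌋`. -/
theorem inducedCycles_t3_odd (k : ℕ) (hk : 5 ≤ k) (hodd : Odd k)
    (A : LineArrangement k)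
    (ht3 : A.t 3 ≠ 0) (hr : ∀ r : ℕ, 3 < r → A.t r = 0) :
    ∀ i : ℕ, 3 ≤ i → i ≤ (k + 9) / 4 → HasInducedCycle A.levi (2 * i) := by
  intro i hi3 hiu
  have hm3 : ∀ p, A.mult p ≤ 3 := LineArrangement.mult_le_three hr
  obtain ⟨P, hP3⟩ := Set.nonempty_of_ncard_ne_zero ht3
  have hP3' : A.mult P = 3 := hP3
  have hcard3 : (A.through P).card = 3 := by rw [A.card_through]; exact hP3'
  obtain ⟨ia, ib, ic, hab, hac, hbc, hset⟩ := Finset.card_eq_three.mp hcard3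
  have hPa : P ∈ A.line ia := A.mem_through.mp (by rw [hset]; simp)
  have hPb : P ∈ A.line ib := A.mem_through.mp (by rw [hset]; simp)
  have h4i : 4 * i ≤ k + 9 := by
    have h := (Nat.le_div_iff_mul_le (k := 4) (by norm_num)).mp hiu
    omega
  obtain ⟨pa⟩ := LineArrangement.exists_gpath hm3 hab hPb (i - 3) (by omega)
  obtain ⟨g, w, hginj, hsing, hinc⟩ :=
    LineArrangement.exists_cycle_data hm3 hab hPa hPb pa hk (by omega)
  have hcyc := LineArrangement.hasInducedCycle_of_data (i - 3) g w hginj hsing hinc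
  rw [show i = i - 3 + 3 by omega]
  exact hcyc
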